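/- Let F be a free group, α an automorphism of F, and G = F ⋊_α ℤ the mapping torus (the semidirect product in which the generator of ℤ acts on F by α). Let H be a subgroup of G containing no non-abelian free subgroup, i.e. there is no injective group homomorphism from the free group of rank 2 into G whose image is contained in H. Then the intersection H ∩ F is cyclic (possibly trivial), H is generated by at most two elements, and in particular H is finitely generated. -/

import Mathlib

open SemidirectProduct

private lemma freeGroup_map_injective' {α β : Type*} {f : α → β} (hf : Function.Injective f) :
    Function.Injective (FreeGroup.map f) := by
  rcases isEmpty_or_nonempty α with h | h
  · intro x y _
    have hone : ∀ z : FreeGroup α, z = 1 := by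
      intro z
      induction z using FreeGroup.induction_on with
      | C1 => rfl
      | of x => exact (h.false x).elim
      | inv_of x _ => exact (h.false x).elim
      | mul x y hx hy => rw [hx, hy, one_mul]
    rw [hone x, hone y]
  · obtain ⟨g, hg⟩ := hf.hasLeftInverse
    intro x y hxy
    have h2 : FreeGroup.map g (FreeGroup.map f x) = FreeGroup.map g (FreeGroup.map f y) := by
      rw [hxy]
    rwa [FreeGroup.map.comp, FreeGroup.map.comp,
      show g ∘ f = id from funext hg, FreeGroup.map.id, FreeGroup.map.id] at h2

private lemma isCyclic_freeGroup_of_subsingleton {S : Type*} [Subsingleton S] :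
    IsCyclic (FreeGroup S) := by
  rcases isEmpty_or_nonempty S with h | ⟨⟨s⟩⟩
  · constructor
    refine ⟨1, fun x => ?_⟩
    have h1 := FreeGroup.closure_range_of S
    rw [Set.range_eq_empty, Subgroup.closure_empty] at h1
    have hx : x ∈ (⊥ : Subgroup (FreeGroup S)) := h1.ge (Subgroup.mem_top x)
    rw [Subgroup.mem_bot] at hx
    simp [hx]
  · constructor
    refine ⟨FreeGroup.of s, fun x => ?_⟩
    have h1 : Set.range (FreeGroup.of : S → FreeGroup S) = {FreeGroup.of s} := by
      ext y
      constructor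
      · rintro ⟨z, rfl⟩; simp [Subsingleton.elim z s]
      · rintro rfl; exact ⟨s, rfl⟩
    have h2 := FreeGroup.closure_range_of S
    rw [h1, ← Subgroup.zpowers_eq_closure] at h2
    exact h2.ge (Subgroup.mem_top x)

/-- In a mapping torus `G = F ⋊_α ℤ` of a free group `F`, any
subgroup `H` containing no non-abelian free subgroup meets the fiber `F` in a cyclic
(possibly trivial) subgroup, is generated by at most two elements, and in particular
is finitely generated. -/
theorem small_subgroup_of_free_mapping_torus
    {ι : Type*} (α : MulAut (FreeGroup ι))
    (H : Subgroup (FreeGroup ι ⋊[zpowersHom (MulAut (FreeGroup ι)) α]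
      Multiplicative ℤ))
    (hsmall : ¬ ∃ f : FreeGroup (Fin 2) →*
        (FreeGroup ι ⋊[zpowersHom (MulAut (FreeGroup ι)) α] Multiplicative ℤ),
      Function.Injective f ∧ f.range ≤ H) :
    IsCyclic ↥(H ⊓ (SemidirectProduct.inl : FreeGroup ι →*
        FreeGroup ι ⋊[zpowersHom (MulAut (FreeGroup ι)) α] Multiplicative ℤ).range) ∧
    (∃ a b : FreeGroup ι ⋊[zpowersHom (MulAut (FreeGroup ι)) α] Multiplicative ℤ,
      H = Subgroup.closure {a, b}) ∧
    H.FG := by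
  set G := FreeGroup ι ⋊[zpowersHom (MulAut (FreeGroup ι)) α] Multiplicative ℤ with hG
  let inlh : FreeGroup ι →* G := SemidirectProduct.inl
  let π : G →* Multiplicative ℤ := SemidirectProduct.rightHom
  set L : Subgroup (FreeGroup ι) := H.comap inlh with hLdef
  have hmapL : L.map inlh = H ⊓ inlh.range := by
    rw [Subgroup.map_comap_eq, inf_comm]
  -- L is cyclic
  have hLcyc : IsCyclic L := by
    by_contra hnc
    have hns : Nontrivial (IsFreeGroup.Generators L) := by
      rw [← not_subsingleton_iff_nontrivial]
      intro hsub
      have : IsCyclic (FreeGroup (IsFreeGroup.Generators L)) :=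
        isCyclic_freeGroup_of_subsingleton
      exact hnc (isCyclic_of_surjective (IsFreeGroup.toFreeGroup (G := L)).symm.toMonoidHom
        (IsFreeGroup.toFreeGroup (G := L)).symm.surjective)
    obtain ⟨a, b, hab⟩ := hns.exists_pair_ne
    have hjinj : Function.Injective (![a, b] : Fin 2 → IsFreeGroup.Generators L) := by
      intro i j hij
      fin_cases i <;> fin_cases j <;> simp_all
    let e : FreeGroup (IsFreeGroup.Generators L) ≃* L := (IsFreeGroup.toFreeGroup (G := L)).symm
    let f : FreeGroup (Fin 2) →* G :=
      inlh.comp ((L.subtype).comp (e.toMonoidHom.comp (FreeGroup.map ![a, b])))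
    refine hsmall ⟨f, ?_, ?_⟩
    · exact inl_injective.comp ((L.subtype_injective).comp
        (e.injective.comp (freeGroup_map_injective' hjinj)))
    · rintro x ⟨w, rfl⟩
      exact (e (FreeGroup.map ![a, b] w)).2
  refine ⟨?_, ?_⟩
  · rw [← hmapL]
    exact isCyclic_of_surjective (L.equivMapOfInjective inlh inl_injective).toMonoidHom
      (L.equivMapOfInjective inlh inl_injective).surjective
  -- find generators
  have hKcyc : IsCyclic ↥(H ⊓ inlh.range) := by
    rw [← hmapL]
    exact isCyclic_of_surjective (L.equivMapOfInjective inlh inl_injective).toMonoidHom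
      (L.equivMapOfInjective inlh inl_injective).surjective
  obtain ⟨c, hc⟩ := hKcyc.exists_generator
  obtain ⟨g, hg⟩ := IsCyclic.exists_generator (α := ↥(H.map π))
  obtain ⟨t, htH, htg⟩ : ∃ t ∈ H, π t = (g : Multiplicative ℤ) := g.2
  have hcH : (c : G) ∈ H := c.2.1
  have key : H = Subgroup.closure {(c : G), t} := by
    apply le_antisymm
    · intro h hh
      have hπh : π h ∈ H.map π := ⟨h, hh, rfl⟩
      obtain ⟨n, hn⟩ := Subgroup.mem_zpowers_iff.mp (hg ⟨π h, hπh⟩)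
      have hval : (g : Multiplicative ℤ) ^ n = π h := by
        have h3 := congrArg (Subtype.val) hn
        simpa using h3
      have hn' : π (t ^ n) = π h := by
        rw [map_zpow, htg, hval]
      have hker : h * (t ^ n)⁻¹ ∈ inlh.range := by
        rw [range_inl_eq_ker_rightHom, MonoidHom.mem_ker, map_mul, map_inv, hn']
        exact mul_inv_cancel (π h)
      have hmem : h * (t ^ n)⁻¹ ∈ H ⊓ inlh.range :=
        ⟨H.mul_mem hh (H.inv_mem (H.zpow_mem htH n)), hker⟩
      obtain ⟨m, hm⟩ := Subgroup.mem_zpowers_iff.mp (hc ⟨h * (t ^ n)⁻¹, hmem⟩)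
      have hm' : (c : G) ^ m = h * (t ^ n)⁻¹ := by
        have h4 := congrArg (Subtype.val) hm
        simpa using h4
      have : h = (c : G) ^ m * t ^ n := by
        rw [hm']; group
      rw [this]
      exact Subgroup.mul_mem _
        (Subgroup.zpow_mem _ (Subgroup.subset_closure (by simp)) m)
        (Subgroup.zpow_mem _ (Subgroup.subset_closure (by simp)) n)
    · rw [Subgroup.closure_le]
      rintro x (rfl | rfl)
      · exact hcH
      · exact htH
  refine ⟨⟨(c : G), t, key⟩, ?_⟩
  exact (Subgroup.fg_iff H).2 ⟨{(c : G), t}, key.symm, Set.toFinite _⟩
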